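/- (Pliss lemma.) Let N ≥ 1 be an integer, let a_0, …, a_{N−1} be real numbers, and let A, δ, δ' be real numbers with a_k ≤ A for all k, 0 < δ' < δ ≤ A, and Σ_{0≤k<N} a_k ≥ δN. Then the number of integers p with 1 ≤ p ≤ N such that Σ_{k≤l<p} a_l ≥ (p−k)δ' for every integer k with 0 ≤ k ≤ p−1 is at least N·(δ−δ')/(A−δ'). -/
import Mathlib


open MeasureTheory Filter Topology
open scoped ENNReal

noncomputable section

namespace SRB

/-- `d_n(E) = #(E ∩ [1,n]) / n`. -/
def densN (E : Set ℕ) (n : ℕ) : ℝ := (Nat.card ↥(E ∩ Set.Icc 1 n) : ℝ) / n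

/-- upper asymptotic density -/
def upperDens (E : Set ℕ) : ℝ := Filter.atTop.limsup fun n => densN E n

/-- lower asymptotic density -/
def lowerDens (E : Set ℕ) : ℝ := Filter.atTop.liminf fun n => densN E n

/-- `E(M) = {k | k + m ∈ E for some 1 ≤ m ≤ M}`. -/
def EM (E : Set ℕ) (M : ℕ) : Set ℕ := {k | ∃ m, 1 ≤ m ∧ m ≤ M ∧ k + m ∈ E}

/-- the set of `δ`-hyperbolic times of the sequence `a`. -/
def Ehyp (a : ℕ → ℝ) (δ : ℝ) : Set ℕ :=
  {p | 1 ≤ p ∧ ∀ k < p, ((p : ℝ) - k) * δ ≤ ∑ l ∈ Finset.Ico k p, a l}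

/-- the set of `(δ,M)`-weakly hyperbolic times of the sequence `a`. -/
def Fweak (a : ℕ → ℝ) (δ : ℝ) (M : ℕ) : Set ℕ :=
  {p | 1 ≤ p ∧ ∀ k, p - M ≤ k → k < p → ((p : ℝ) - k) * δ ≤ ∑ l ∈ Finset.Ico k p, a l}

/-- the connected component (maximal interval of integers) of `p` in `S`. -/
def component (S : Set ℕ) (p : ℕ) : Set ℕ :=
  {q | q ∈ S ∧ ∀ r, min p q ≤ r → r ≤ max p q → r ∈ S}

/-- the set of `(δ,M)`-mildly hyperbolic times of the sequence `a`. -/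
def Gmild (a : ℕ → ℝ) (δ : ℝ) (M : ℕ) : Set ℕ :=
  {p | p ∈ EM (Fweak a δ M) M ∧
    ∀ k ∈ component (EM (Fweak a δ M) M) p, k < p →
      ((p : ℝ) - k) * (δ / 2) ≤ ∑ l ∈ Finset.Ico k p, a l}

variable {X : Type*} [MetricSpace X] [CompactSpace X] [MeasurableSpace X] [BorelSpace X]

/-- the sequence `Φ_x = (φ(Tⁿ x))ₙ`. -/
def Phi (T : X ≃ₜ X) (φ : X → ℝ) (x : X) : ℕ → ℝ := fun n => φ ((⇑T)^[n] x)

/-- the Birkhoff sum `φ_n(x)`. -/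
def birk (T : X ≃ₜ X) (φ : X → ℝ) (x : X) (n : ℕ) : ℝ := ∑ k ∈ Finset.range n, φ ((⇑T)^[k] x)

/-- `φ̄_*(x) = limsup_n φ_n(x)/n`. -/
def phiStar (T : X ≃ₜ X) (φ : X → ℝ) (x : X) : ℝ :=
  Filter.atTop.limsup fun n => birk T φ x n / n

/-- the empirical measure `μ_x^n`. -/
def emp (T : X ≃ₜ X) (x : X) (n : ℕ) : Measure X :=
  (n : ℝ≥0∞)⁻¹ • ∑ k ∈ Finset.range n, Measure.dirac ((⇑T)^[k] x)

open scoped Classical in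
/-- the empirical measure on a set of times, `μ_x^n[E]`. -/
def empOn (T : X ≃ₜ X) (x : X) (n : ℕ) (E : Set ℕ) : Measure X :=
  (n : ℝ≥0∞)⁻¹ • ∑ k ∈ Finset.range n, if k ∈ E then Measure.dirac ((⇑T)^[k] x) else 0

/-- weak-* convergence of a family of finite measures along a filter. -/
def WeakLim (L : Filter ℕ) (μs : ℕ → Measure X) (μ : Measure X) : Prop :=
  ∀ f : C(X, ℝ), Tendsto (fun n => ∫ y, f y ∂(μs n)) L (𝓝 (∫ y, f y ∂μ))

/-- `pw(x)`: the set of weak-* limit points of the empirical measures `(μ_x^n)_{n ≥ 1}`. -/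
def pw (T : X ≃ₜ X) (x : X) : Set (Measure X) :=
  {μ | IsProbabilityMeasure μ ∧ ∃ s : ℕ → ℕ, StrictMono s ∧ (∀ j, 1 ≤ s j) ∧
    ∀ f : C(X, ℝ), Tendsto (fun j => ∫ y, f y ∂(emp T x (s j))) atTop (𝓝 (∫ y, f y ∂μ))}

/-- `underline-d_φ(x) = lim_{δ→0⁺} lim_{M→∞} d̲(E^δ_{Φ_x}(M))`; both limits being monotone
they equal the supremum. -/
def lowerDphi (T : X ≃ₜ X) (φ : X → ℝ) (x : X) : ℝ :=
  ⨆ δ : Set.Ioi (0 : ℝ), ⨆ M : ℕ, lowerDens (EM (Ehyp (Phi T φ x) δ.1) M)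

/-- `d̄⁺ = lim_{δ→0⁺} limsup_M d̄(F_a^{δ,M}(M))`. -/
def upDplus (a : ℕ → ℝ) : ℝ :=
  ⨆ δ : Set.Ioi (0 : ℝ), Filter.atTop.limsup fun M => upperDens (EM (Fweak a δ.1 M) M)

/-- `d̄⁻ = lim_{δ→0⁺} liminf_M d̄(F_a^{δ,M}(M))`. -/
def upDminus (a : ℕ → ℝ) : ℝ :=
  ⨆ δ : Set.Ioi (0 : ℝ), Filter.atTop.liminf fun M => upperDens (EM (Fweak a δ.1 M) M)

/-- static entropy of a measure w.r.t. the finite partition given by the fibers of `q`. -/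
def Hstat {ι : Type*} [Fintype ι] (μ : Measure X) (q : X → ι) : ℝ :=
  -∑ i : ι, (μ (q ⁻¹' {i})).toReal * Real.log (μ (q ⁻¹' {i})).toReal

/-- the iterated partition `P^F` as a coding map. -/
def codeIter (T : X ≃ₜ X) {ι : Type*} (p : X → ι) (F : Finset ℕ) : X → (F → ι) :=
  fun x k => p ((⇑T)^[(k : ℕ)] x)

end SRB

namespace SRB

/-- Pliss lemma: if `a_k ≤ A` for `k < N`, `0 < δ' < δ ≤ A` and
`∑_{k<N} a_k ≥ δN`, then the number of `1 ≤ p ≤ N` such that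
`∑_{k≤l<p} a_l ≥ (p−k)δ'` for all `0 ≤ k ≤ p−1` is at least `N(δ−δ')/(A−δ')`. -/
theorem statement1 (N : ℕ) (hN : 1 ≤ N) (a : ℕ → ℝ) (A δ δ' : ℝ)
    (hA : ∀ k < N, a k ≤ A) (hδ'pos : 0 < δ') (hδ'δ : δ' < δ) (hδA : δ ≤ A)
    (hsum : (N : ℝ) * δ ≤ ∑ k ∈ Finset.range N, a k) :
    (N : ℝ) * (δ - δ') / (A - δ') ≤
      (Nat.card {p : ℕ | 1 ≤ p ∧ p ≤ N ∧
        ∀ k < p, ((p : ℝ) - k) * δ' ≤ ∑ l ∈ Finset.Ico k p, a l} : ℝ) := by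
  classical
  have hAδ' : (0:ℝ) < A - δ' := by linarith
  set S : ℕ → ℝ := fun n => ∑ k ∈ Finset.range n, (a k - δ') with hSdef
  have key : ∀ k p : ℕ, k ≤ p →
      S p - S k = (∑ l ∈ Finset.Ico k p, a l) - ((p:ℝ)-k)*δ' := by
    intro k p hkp
    have h1 : ∑ l ∈ Finset.Ico k p, (a l - δ') = S p - S k :=
      Finset.sum_Ico_eq_sub _ hkp
    have h2 : ∑ l ∈ Finset.Ico k p, (a l - δ')
        = (∑ l ∈ Finset.Ico k p, a l) - ((p:ℝ)-k)*δ' := by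
      rw [Finset.sum_sub_distrib, Finset.sum_const, Nat.card_Ico, nsmul_eq_mul,
        Nat.cast_sub hkp]
    linarith
  set P : Finset ℕ := (Finset.Icc 1 N).filter (fun p => ∀ k < p, S k ≤ S p) with hP
  have hset : {p : ℕ | 1 ≤ p ∧ p ≤ N ∧
        ∀ k < p, ((p : ℝ) - k) * δ' ≤ ∑ l ∈ Finset.Ico k p, a l} = ↑P := by
    ext p
    simp only [hP, Finset.coe_filter, Finset.mem_Icc, Set.mem_setOf_eq]
    constructor
    · rintro ⟨h1, h2, h3⟩
      refine ⟨⟨h1, h2⟩, fun k hk => ?_⟩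
      have hk1 := key k p hk.le
      have hk2 := h3 k hk
      linarith
    · rintro ⟨⟨h1, h2⟩, h3⟩
      refine ⟨h1, h2, fun k hk => ?_⟩
      have hk1 := key k p hk.le
      have hk2 := h3 k hk
      linarith
  have hne : ∀ n : ℕ, (Finset.range (n+1)).Nonempty := fun n => Finset.nonempty_range_add_one
  set Mx : ℕ → ℝ := fun n => (Finset.range (n+1)).sup' (hne n) S with hMx
  have hSM : ∀ n, S n ≤ Mx n := fun n =>
    Finset.le_sup' S (Finset.self_mem_range_succ n)
  have hMsucc : ∀ n, Mx (n+1) = max (S (n+1)) (Mx n) := by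
    intro n
    apply le_antisymm
    · apply Finset.sup'_le
      intro b hb
      rcases Nat.lt_succ_iff_lt_or_eq.mp (Finset.mem_range.mp hb) with hb' | hb'
      · exact le_max_of_le_right (Finset.le_sup' S (Finset.mem_range.mpr hb'))
      · subst hb'; exact le_max_left _ _
    · apply max_le
      · exact Finset.le_sup' S (Finset.self_mem_range_succ (n+1))
      · exact Finset.sup'_mono S (Finset.range_subset_range.mpr (Nat.le_succ _)) (hne n)
  have hM0 : Mx 0 = 0 := by simp [hMx, hSdef]
  have hstep : ∀ n < N, Mx (n+1) - Mx n ≤ if (n+1) ∈ P then A - δ' else 0 := by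
    intro n hn
    rcases le_or_gt (S (n+1)) (Mx n) with h | h
    · have heq : Mx (n+1) = Mx n := by rw [hMsucc n]; exact max_eq_right h
      rw [heq]
      split <;> linarith
    · have hmem : (n+1) ∈ P := by
        rw [hP, Finset.mem_filter, Finset.mem_Icc]
        refine ⟨⟨Nat.le_add_left 1 n, hn⟩, fun k hk => ?_⟩
        have hk' : k ≤ n := Nat.lt_succ_iff.mp hk
        have hle : S k ≤ Mx n := Finset.le_sup' S (Finset.mem_range_succ_iff.mpr hk')
        linarith
      rw [if_pos hmem]
      have hM1 : Mx (n+1) = S (n+1) := by rw [hMsucc n]; exact max_eq_left h.le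
      have hdiff : S (n+1) - S n = a n - δ' := by
        simp only [hSdef, Finset.sum_range_succ, Finset.sum_sub_distrib,
          Finset.sum_const, Finset.card_range, nsmul_eq_mul]
        push_cast
        ring
      have hSn := hSM n
      have han := hA n hn
      linarith
  have htel : Mx N - Mx 0 = ∑ n ∈ Finset.range N, (Mx (n+1) - Mx n) :=
    (Finset.sum_range_sub Mx N).symm
  have hsumle : ∑ n ∈ Finset.range N, (Mx (n+1) - Mx n)
      ≤ ∑ n ∈ Finset.range N, (if (n+1) ∈ P then A - δ' else 0) :=
    Finset.sum_le_sum fun n hn => hstep n (Finset.mem_range.mp hn)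
  have hreindex : ∑ n ∈ Finset.range N, (if (n+1) ∈ P then A - δ' else 0)
      = (P.card : ℝ) * (A - δ') := by
    have h1 : ∑ n ∈ Finset.range N, (if (n+1) ∈ P then A - δ' else 0)
        = ∑ p ∈ Finset.Ico 1 (N+1), (if p ∈ P then A - δ' else 0) := by
      rw [Finset.sum_Ico_eq_sum_range]
      simp [add_comm]
    rw [h1, Finset.Ico_add_one_right_eq_Icc]
    have h2 : Finset.Icc 1 N ∩ P = P :=
      Finset.inter_eq_right.mpr (hP ▸ Finset.filter_subset _ _)
    rw [Finset.sum_ite_mem, h2, Finset.sum_const, nsmul_eq_mul]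
  have hSN : (N:ℝ) * (δ - δ') ≤ S N := by
    have : S N = (∑ k ∈ Finset.range N, a k) - (N:ℝ) * δ' := by
      simp [hSdef, Finset.sum_sub_distrib, mul_comm]
    rw [this]
    nlinarith
  have hfinal : (N:ℝ) * (δ - δ') ≤ (P.card : ℝ) * (A - δ') := by
    have h3 := hSM N
    linarith
  rw [hset]
  have hcard : (Nat.card (↑P : Set ℕ) : ℝ) = (P.card : ℝ) := by
    rw [Nat.card_coe_set_eq, Set.ncard_coe_finset]
  rw [hcard, div_le_iff₀ hAδ']
  exact hfinal

end SRB
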